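/- Let E/F be a finite Galois extension of fields whose Galois group is cyclic, generated by α, and let ρ : G → GL(d,E) be a representation of a group G. Suppose A ∈ GL(d,E) and the matrix C = A·(A^α)⁻¹ satisfies C⁻¹ρ(g)C = ρ(g)^α for all g ∈ G. Then every entry of A⁻¹ρ(g)A lies in F, for all g ∈ G. -/
import Mathlib


/-- If `A ∈ GL(d,E)` and `C = A·(A^α)⁻¹` satisfies `C⁻¹ρ(g)C = ρ(g)^α` for all
`g ∈ G`, then every entry of `A⁻¹ρ(g)A` lies in `F`, for all `g ∈ G`. -/
theorem intertwiner_from_A_rewrites_over_F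
    {F E : Type*} [Field F] [Field E] [Algebra F E]
    [FiniteDimensional F E] [IsGalois F E]
    (α : E ≃ₐ[F] E)
    (hgen : ∀ σ : E ≃ₐ[F] E, σ ∈ Subgroup.zpowers α)
    {G : Type*} [Group G] {d : ℕ}
    (ρ : G →* GL (Fin d) E)
    (A : GL (Fin d) E)
    (C : Matrix (Fin d) (Fin d) E)
    (hCdef : C = (A : Matrix (Fin d) (Fin d) E)
        * ((A : Matrix (Fin d) (Fin d) E).map ⇑α)⁻¹)
    (hC : ∀ g : G, C⁻¹ * (ρ g : Matrix (Fin d) (Fin d) E) * C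
        = (ρ g : Matrix (Fin d) (Fin d) E).map ⇑α) :
    ∀ g : G, ∀ i j : Fin d,
      ((A⁻¹ * ρ g * A : GL (Fin d) E) : Matrix (Fin d) (Fin d) E) i j
        ∈ (algebraMap F E).range := by
  intro g i j
  have hmul : ∀ X Y : Matrix (Fin d) (Fin d) E,
      (X * Y).map ⇑α = X.map ⇑α * Y.map ⇑α := by
    intro X Y
    ext i j
    simp [Matrix.map_apply, Matrix.mul_apply, map_sum]
  have hone : (1 : Matrix (Fin d) (Fin d) E).map ⇑α = 1 := by
    ext i j
    simp [Matrix.map_apply, Matrix.one_apply, apply_ite]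
  have haa' : (A : Matrix (Fin d) (Fin d) E)
      * ((A⁻¹ : GL (Fin d) E) : Matrix (Fin d) (Fin d) E) = 1 := A.mul_inv
  have haa : ((A⁻¹ : GL (Fin d) E) : Matrix (Fin d) (Fin d) E)
      * (A : Matrix (Fin d) (Fin d) E) = 1 := A.inv_mul
  have hmap1 : (A : Matrix (Fin d) (Fin d) E).map ⇑α
      * ((A⁻¹ : GL (Fin d) E) : Matrix (Fin d) (Fin d) E).map ⇑α = 1 := by
    rw [← hmul, haa', hone]
  have hmap2 : ((A⁻¹ : GL (Fin d) E) : Matrix (Fin d) (Fin d) E).map ⇑α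
      * (A : Matrix (Fin d) (Fin d) E).map ⇑α = 1 := by
    rw [← hmul, haa, hone]
  have hmapinv : ((A : Matrix (Fin d) (Fin d) E).map ⇑α)⁻¹
      = ((A⁻¹ : GL (Fin d) E) : Matrix (Fin d) (Fin d) E).map ⇑α :=
    Matrix.inv_eq_right_inv hmap1
  have hCinv : C⁻¹ = (A : Matrix (Fin d) (Fin d) E).map ⇑α
      * ((A⁻¹ : GL (Fin d) E) : Matrix (Fin d) (Fin d) E) := by
    apply Matrix.inv_eq_right_inv
    rw [hCdef, hmapinv, mul_assoc,
      ← mul_assoc (((A⁻¹ : GL (Fin d) E) : Matrix (Fin d) (Fin d) E).map ⇑α),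
      hmap2, one_mul, haa']
  set x := ((A⁻¹ : GL (Fin d) E) : Matrix (Fin d) (Fin d) E) with hx
  set y := (A : Matrix (Fin d) (Fin d) E) with hy
  set r := ((ρ g : GL (Fin d) E) : Matrix (Fin d) (Fin d) E) with hr
  have hfix : (x * r * y).map ⇑α = x * r * y := by
    rw [hmul, hmul, ← hC g, hCinv, hCdef, hmapinv]
    calc x.map ⇑α * (y.map ⇑α * x * r * (y * x.map ⇑α)) * y.map ⇑α
        = (x.map ⇑α * y.map ⇑α) * (x * r * y) * (x.map ⇑α * y.map ⇑α) := by
          simp only [mul_assoc]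
      _ = x * r * y := by rw [hmap2, one_mul, mul_one]
  have hgoal : ((A⁻¹ * ρ g * A : GL (Fin d) E) : Matrix (Fin d) (Fin d) E)
      = x * r * y := rfl
  rw [hgoal]
  have hαfix : α ((x * r * y) i j) = (x * r * y) i j := by
    conv_rhs => rw [← hfix]
    rfl
  have hallfix : ∀ σ : E ≃ₐ[F] E, σ ((x * r * y) i j) = (x * r * y) i j := by
    intro σ
    have hα : α ∈ MulAction.stabilizer (E ≃ₐ[F] E) ((x * r * y) i j) := hαfix
    exact (Subgroup.zpowers_le.mpr hα) (hgen σ)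
  have hbot : (x * r * y) i j ∈ (⊥ : IntermediateField F E) := by
    rw [← IsGalois.fixedField_fixingSubgroup (⊥ : IntermediateField F E)]
    intro σ
    exact hallfix σ
  rw [IntermediateField.mem_bot] at hbot
  exact hbot
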